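/- Let d ≥ 2 be an integer and C₀ > 0. Let K : ℝ^d × (0,∞) → ℝ be measurable and satisfy |K(y,s)| ≤ C₀·min(‖y‖^{−d}, s^{−d/2}) for all y ≠ 0 and s > 0. Then there exists a constant C > 0 (depending only on d and C₀) such that for all t > 0 and all x ∈ ℝ^d with ‖x‖ ≥ e·√t one has ∫₀^t ∫_{{y : ‖y‖ ≤ ‖x‖}} |K(y,s)| dy ds ≤ C·t·log(‖x‖/√t). -/

import Mathlib

open MeasureTheory

open MeasureTheory Metric Set
open scoped ENNReal

noncomputable section

lemma inner_bound (d : ℕ) (hd : 2 ≤ d) (C₀ : ℝ) (hC₀ : 0 < C₀) (R s : ℝ) (hs : 0 < s)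
    (hsR : Real.sqrt s ≤ R) :
    ∫⁻ y in closedBall (0 : EuclideanSpace ℝ (Fin d)) R,
        ENNReal.ofReal (C₀ * min (‖y‖ ^ (-(d : ℝ))) (s ^ (-(d : ℝ) / 2)))
      ≤ volume (ball (0 : EuclideanSpace ℝ (Fin d)) 1)
          * ENNReal.ofReal (C₀ * (1 + d * Real.log (R / Real.sqrt s))) := by
  have hsq : 0 < Real.sqrt s := Real.sqrt_pos.mpr hs
  have hR : 0 < R := hsq.trans_le hsR
  have hd0 : (0:ℝ) < d := by positivity
  have hdne : (d:ℝ) ≠ 0 := hd0.ne'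
  set V : ℝ≥0∞ := volume (ball (0 : EuclideanSpace ℝ (Fin d)) 1) with hV
  set ν : Measure (EuclideanSpace ℝ (Fin d)) := volume.restrict (closedBall (0 : EuclideanSpace ℝ (Fin d)) R) with hν
  set g : EuclideanSpace ℝ (Fin d) → ℝ := fun y => C₀ * min (‖y‖ ^ (-(d : ℝ))) (s ^ (-(d : ℝ) / 2)) with hg
  have hgm : Measurable g := by fun_prop
  have hgnn : ∀ y, 0 ≤ g y := fun y =>
    mul_nonneg hC₀.le (le_min (Real.rpow_nonneg (norm_nonneg _) _) (Real.rpow_nonneg hs.le _))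
  set M : ℝ := s ^ (-(d : ℝ) / 2) with hM
  have hMpos : 0 < M := Real.rpow_pos_of_pos hs _
  set B : ℝ := C₀ * M with hB
  have hBpos : 0 < B := mul_pos hC₀ hMpos
  set lam0 : ℝ := C₀ * R ^ (-(d : ℝ)) with hlam0
  have hlam0pos : 0 < lam0 := mul_pos hC₀ (Real.rpow_pos_of_pos hR _)
  -- √s ^ (d:ℝ) = s ^ ((d:ℝ)/2)
  have hsqrt_rpow : (Real.sqrt s) ^ (d : ℝ) = s ^ ((d : ℝ) / 2) := by
    rw [Real.sqrt_eq_rpow, ← Real.rpow_mul hs.le]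
    congr 1
    ring
  have hMeq : M = ((Real.sqrt s) ^ (d : ℝ))⁻¹ := by
    rw [hsqrt_rpow, ← Real.rpow_neg hs.le, hM, neg_div]
  have hlam0B : lam0 ≤ B := by
    have h1 : R ^ (-(d : ℝ)) ≤ (Real.sqrt s) ^ (-(d : ℝ)) :=
      Real.rpow_le_rpow_of_nonpos hsq hsR (neg_nonpos.mpr hd0.le)
    have h2 : (Real.sqrt s) ^ (-(d : ℝ)) = M := by
      rw [Real.rpow_neg hsq.le, hMeq]
    exact mul_le_mul_of_nonneg_left (h2 ▸ h1) hC₀.le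
  -- measure of closed balls
  have hcb : ∀ r : ℝ, 0 ≤ r → volume (closedBall (0 : EuclideanSpace ℝ (Fin d)) r) = ENNReal.ofReal (r ^ d) * V := by
    intro r hr
    rw [hV, Measure.addHaar_closedBall _ _ hr, finrank_euclideanSpace_fin]
  -- layer cake
  have key := lintegral_eq_lintegral_meas_lt ν (Filter.Eventually.of_forall hgnn)
    hgm.aemeasurable
  have hLHS : (∫⁻ y in closedBall (0 : EuclideanSpace ℝ (Fin d)) R,
      ENNReal.ofReal (C₀ * min (‖y‖ ^ (-(d : ℝ))) (s ^ (-(d : ℝ) / 2))))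
      = ∫⁻ lam in Ioi (0:ℝ), ν {y | lam < g y} := key
  rw [hLHS]
  -- split the λ-integral
  have hsplit1 : (∫⁻ lam in Ioi (0:ℝ), ν {y | lam < g y})
      = (∫⁻ lam in Ioc (0:ℝ) B, ν {y | lam < g y}) + ∫⁻ lam in Ioi B, ν {y | lam < g y} := by
    rw [← lintegral_union measurableSet_Ioi (Ioc_disjoint_Ioi le_rfl),
      Ioc_union_Ioi_eq_Ioi hBpos.le]
  have hsplit2 : (∫⁻ lam in Ioc (0:ℝ) B, ν {y | lam < g y})
      = (∫⁻ lam in Ioc (0:ℝ) lam0, ν {y | lam < g y})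
        + ∫⁻ lam in Ioc lam0 B, ν {y | lam < g y} := by
    rw [← lintegral_union measurableSet_Ioc (Ioc_disjoint_Ioc_of_le le_rfl),
      Ioc_union_Ioc_eq_Ioc hlam0pos.le hlam0B]
  -- piece 1
  have hT1 : (∫⁻ lam in Ioc (0:ℝ) lam0, ν {y | lam < g y}) ≤ ENNReal.ofReal C₀ * V := by
    have h1 : ∀ lam : ℝ, ν {y | lam < g y} ≤ ENNReal.ofReal (R ^ d) * V := by
      intro lam
      calc ν {y | lam < g y} ≤ ν univ := measure_mono (subset_univ _)
        _ = volume (closedBall (0 : EuclideanSpace ℝ (Fin d)) R) := by rw [hν, Measure.restrict_apply_univ]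
        _ = ENNReal.ofReal (R ^ d) * V := hcb R hR.le
    calc (∫⁻ lam in Ioc (0:ℝ) lam0, ν {y | lam < g y})
        ≤ ∫⁻ _ in Ioc (0:ℝ) lam0, ENNReal.ofReal (R ^ d) * V :=
          lintegral_mono fun lam => h1 lam
      _ = (ENNReal.ofReal (R ^ d) * V) * ENNReal.ofReal lam0 := by
          rw [setLIntegral_const, Real.volume_Ioc, sub_zero]
      _ = ENNReal.ofReal C₀ * V := by
          rw [mul_right_comm, ← ENNReal.ofReal_mul (by positivity)]
          congr 2
          rw [hlam0, ← Real.rpow_natCast R d, mul_comm (R ^ (d:ℝ)), mul_assoc,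
            ← Real.rpow_add hR]
          simp
  -- piece 2
  have hT2 : (∫⁻ lam in Ioc lam0 B, ν {y | lam < g y})
      ≤ ENNReal.ofReal (C₀ * ((d:ℝ) * Real.log (R / Real.sqrt s))) * V := by
    have hpt : ∀ lam ∈ Ioc lam0 B, ν {y | lam < g y} ≤ ENNReal.ofReal (C₀ / lam) * V := by
      intro lam hlam
      have hlampos : 0 < lam := hlam0pos.trans hlam.1
      set ρ : ℝ := (C₀ / lam) ^ ((d:ℝ)⁻¹) with hρ
      have hρnn : 0 ≤ ρ := Real.rpow_nonneg (by positivity) _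
      have hsubset : {y : EuclideanSpace ℝ (Fin d) | lam < g y}
          ⊆ closedBall (0 : EuclideanSpace ℝ (Fin d)) ρ := by
        intro y hy
        have hy' : lam < g y := hy
        have h1 : lam < C₀ * ‖y‖ ^ (-(d:ℝ)) :=
          lt_of_lt_of_le hy' (mul_le_mul_of_nonneg_left (min_le_left _ _) hC₀.le)
        have hny : 0 < ‖y‖ := by
          rcases eq_or_lt_of_le (norm_nonneg y) with h | h
          · exfalso
            rw [← h, Real.zero_rpow (neg_ne_zero.mpr hdne), mul_zero] at h1
            exact absurd h1 (not_lt.mpr hlampos.le)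
          · exact h
        have hPpos : 0 < ‖y‖ ^ (d:ℝ) := Real.rpow_pos_of_pos hny _
        have h2 : lam < C₀ / ‖y‖ ^ (d:ℝ) := by
          rwa [Real.rpow_neg (norm_nonneg y), ← div_eq_mul_inv] at h1
        have h3 : ‖y‖ ^ (d:ℝ) < C₀ / lam := by
          rw [lt_div_iff₀ hlampos]
          rw [lt_div_iff₀ hPpos] at h2
          linarith [h2]
        have h4 : ‖y‖ ≤ ρ := by
          have := Real.rpow_le_rpow hPpos.le h3.le (inv_nonneg.mpr hd0.le)
          rwa [← Real.rpow_mul (norm_nonneg y), mul_inv_cancel₀ hdne, Real.rpow_one] at this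
        exact mem_closedBall_zero_iff.mpr h4
      have hms : MeasurableSet {y : EuclideanSpace ℝ (Fin d) | lam < g y} :=
        measurableSet_lt measurable_const hgm
      calc ν {y : EuclideanSpace ℝ (Fin d) | lam < g y}
          ≤ volume {y : EuclideanSpace ℝ (Fin d) | lam < g y} := by
            rw [hν, Measure.restrict_apply hms]
            exact measure_mono inter_subset_left
        _ ≤ volume (closedBall (0 : EuclideanSpace ℝ (Fin d)) ρ) := measure_mono hsubset
        _ = ENNReal.ofReal (ρ ^ d) * V := hcb ρ hρnn
        _ = ENNReal.ofReal (C₀ / lam) * V := by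
            congr 1
            rw [hρ, ← Real.rpow_natCast ((C₀ / lam) ^ ((d:ℝ)⁻¹)) d,
              ← Real.rpow_mul (by positivity), inv_mul_cancel₀ hdne, Real.rpow_one]
    have hmeasb : Measurable fun lam : ℝ => ENNReal.ofReal (C₀ / lam) * V := by fun_prop
    have hcont : ContinuousOn (fun lam : ℝ => C₀ / lam) (uIcc lam0 B) := by
      apply continuousOn_const.div continuousOn_id
      intro x hx
      rw [uIcc_of_le hlam0B] at hx
      exact (hlam0pos.trans_le hx.1).ne'
    have hii : IntervalIntegrable (fun lam : ℝ => C₀ / lam) volume lam0 B :=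
      hcont.intervalIntegrable
    have hint : IntegrableOn (fun lam : ℝ => C₀ / lam) (Ioc lam0 B) volume := hii.1
    have hnn : 0 ≤ᵐ[volume.restrict (Ioc lam0 B)] fun lam : ℝ => C₀ / lam := by
      filter_upwards [ae_restrict_mem measurableSet_Ioc] with x hx
      exact div_nonneg hC₀.le (hlam0pos.trans hx.1).le
    have hBdiv : B / lam0 = (R / Real.sqrt s) ^ (d:ℝ) := by
      have hsd : (Real.sqrt s) ^ (d:ℝ) ≠ 0 := (Real.rpow_pos_of_pos hsq _).ne'
      have hRd : R ^ (d:ℝ) ≠ 0 := (Real.rpow_pos_of_pos hR _).ne'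
      rw [hB, hlam0, hMeq, Real.rpow_neg hR.le, Real.div_rpow hR.le hsq.le]
      field_simp
    have hval : (∫ lam in Ioc lam0 B, C₀ / lam)
        = C₀ * ((d:ℝ) * Real.log (R / Real.sqrt s)) := by
      rw [← intervalIntegral.integral_of_le hlam0B]
      have h0 : (0:ℝ) ∉ uIcc lam0 B := by
        rw [uIcc_of_le hlam0B]
        intro h
        exact absurd h.1 (not_le.mpr hlam0pos)
      simp_rw [div_eq_mul_inv]
      rw [intervalIntegral.integral_const_mul, integral_inv h0, hBdiv,
        Real.log_rpow (div_pos hR hsq)]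
      rw [← div_eq_mul_inv]
    calc (∫⁻ lam in Ioc lam0 B, ν {y | lam < g y})
        ≤ ∫⁻ lam in Ioc lam0 B, ENNReal.ofReal (C₀ / lam) * V :=
          setLIntegral_mono hmeasb hpt
      _ = (∫⁻ lam in Ioc lam0 B, ENNReal.ofReal (C₀ / lam)) * V :=
          lintegral_mul_const _ (by fun_prop)
      _ = ENNReal.ofReal (∫ lam in Ioc lam0 B, C₀ / lam) * V := by
          rw [← ofReal_integral_eq_lintegral_ofReal hint hnn]
      _ = ENNReal.ofReal (C₀ * ((d:ℝ) * Real.log (R / Real.sqrt s))) * V := by rw [hval]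
  -- piece 3
  have hT3 : (∫⁻ lam in Ioi B, ν {y | lam < g y}) = 0 := by
    have hempty : ∀ lam ∈ Ioi B, {y : EuclideanSpace ℝ (Fin d) | lam < g y} = ∅ := by
      intro lam hlam
      apply eq_empty_iff_forall_notMem.mpr
      intro y hy
      have : g y ≤ B := by
        rw [hg, hB]
        exact mul_le_mul_of_nonneg_left (min_le_right _ _) hC₀.le
      exact absurd (lt_of_le_of_lt this hlam) (not_lt.mpr (le_of_lt hy))
    calc (∫⁻ lam in Ioi B, ν {y | lam < g y})
        = ∫⁻ _ in Ioi B, (0:ℝ≥0∞) := by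
          apply setLIntegral_congr_fun measurableSet_Ioi
          exact fun lam hlam => by rw [hempty lam hlam]; simp
      _ = 0 := lintegral_zero
  -- combine
  have hlognn : 0 ≤ Real.log (R / Real.sqrt s) :=
    Real.log_nonneg ((le_div_iff₀ hsq).mpr (by linarith))
  calc (∫⁻ lam in Ioi (0:ℝ), ν {y | lam < g y})
      = (∫⁻ lam in Ioc (0:ℝ) lam0, ν {y | lam < g y})
        + (∫⁻ lam in Ioc lam0 B, ν {y | lam < g y})
        + ∫⁻ lam in Ioi B, ν {y | lam < g y} := by rw [hsplit1, hsplit2]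
    _ ≤ ENNReal.ofReal C₀ * V + ENNReal.ofReal (C₀ * ((d:ℝ) * Real.log (R / Real.sqrt s))) * V
        + 0 := add_le_add (add_le_add hT1 hT2) (le_of_eq hT3)
    _ = V * ENNReal.ofReal (C₀ * (1 + d * Real.log (R / Real.sqrt s))) := by
        rw [add_zero, ← add_mul, ← ENNReal.ofReal_add hC₀.le (by positivity), mul_comm]
        ring_nf
end

/-- If `K : ℝ^d × (0,∞) → ℝ` is measurable and satisfies
`|K(y,s)| ≤ C₀ min(‖y‖^{−d}, s^{−d/2})`, then there is `C > 0` depending only on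
`d` and `C₀` such that for all `t > 0` and `‖x‖ ≥ e√t`,
`∫₀^t ∫_{‖y‖ ≤ ‖x‖} |K(y,s)| dy ds ≤ C t log(‖x‖/√t)`. -/
theorem stmt3 (d : ℕ) (hd : 2 ≤ d) (C₀ : ℝ) (hC₀ : 0 < C₀) :
    ∃ C > (0 : ℝ), ∀ K : EuclideanSpace ℝ (Fin d) → ℝ → ℝ,
      Measurable (Function.uncurry K) →
      (∀ y : EuclideanSpace ℝ (Fin d), y ≠ 0 → ∀ s : ℝ, 0 < s →
        |K y s| ≤ C₀ * min (‖y‖ ^ (-(d : ℝ))) (s ^ (-(d : ℝ) / 2))) →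
      ∀ t : ℝ, 0 < t → ∀ x : EuclideanSpace ℝ (Fin d),
        Real.exp 1 * Real.sqrt t ≤ ‖x‖ →
        ∫⁻ s in Set.Ioc (0 : ℝ) t,
            ∫⁻ y in {y : EuclideanSpace ℝ (Fin d) | ‖y‖ ≤ ‖x‖}, ENNReal.ofReal |K y s|
          ≤ ENNReal.ofReal (C * t * Real.log (‖x‖ / Real.sqrt t)) := by
  have hd0 : (0:ℝ) < d := by positivity
  set V : ℝ≥0∞ := volume (ball (0 : EuclideanSpace ℝ (Fin d)) 1) with hV
  have hVfin : V ≠ ⊤ := measure_ball_lt_top.ne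
  have hVpos : 0 < V := measure_ball_pos _ _ one_pos
  set Vr : ℝ := V.toReal with hVr
  have hVrpos : 0 < Vr := ENNReal.toReal_pos hVpos.ne' hVfin
  refine ⟨Vr * (C₀ * (4 * d)), by positivity, ?_⟩
  intro K hKm hKb t ht x hx
  set R : ℝ := ‖x‖ with hR
  have hrt : 0 < Real.sqrt t := Real.sqrt_pos.mpr ht
  have he1 : (1:ℝ) ≤ Real.exp 1 := Real.one_le_exp zero_le_one
  have hrtR : Real.sqrt t ≤ R := le_trans (le_mul_of_one_le_left hrt.le he1) hx
  have hRpos : 0 < R := hrt.trans_le hrtR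
  set L : ℝ := Real.log (R / Real.sqrt t) with hL
  have hL1 : 1 ≤ L := by
    rw [hL, ← Real.log_exp 1]
    apply Real.log_le_log (Real.exp_pos 1)
    rw [le_div_iff₀ hrt]
    exact hx
  have hset : {y : EuclideanSpace ℝ (Fin d) | ‖y‖ ≤ ‖x‖}
      = closedBall (0 : EuclideanSpace ℝ (Fin d)) R := by
    ext y; simp [mem_closedBall_zero_iff, hR]
  rw [hset]
  -- pointwise-in-s bound
  have hstep : ∀ s ∈ Ioc (0:ℝ) t,
      (∫⁻ y in closedBall (0 : EuclideanSpace ℝ (Fin d)) R, ENNReal.ofReal |K y s|)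
        ≤ V * ENNReal.ofReal (C₀ * (1 + d * (L + Real.sqrt t / Real.sqrt s))) := by
    intro s hsmem
    obtain ⟨hs, hst⟩ := hsmem
    have hsq : 0 < Real.sqrt s := Real.sqrt_pos.mpr hs
    have hsR : Real.sqrt s ≤ R := le_trans (Real.sqrt_le_sqrt hst) hrtR
    have hae : ∀ᵐ y ∂(volume.restrict (closedBall (0 : EuclideanSpace ℝ (Fin d)) R)),
        ENNReal.ofReal |K y s| ≤
          ENNReal.ofReal (C₀ * min (‖y‖ ^ (-(d : ℝ))) (s ^ (-(d : ℝ) / 2))) := by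
      have h00 : volume ({0} : Set (EuclideanSpace ℝ (Fin d))) = 0 := by
        apply measure_mono_null (by simp : ({0} : Set (EuclideanSpace ℝ (Fin d)))
          ⊆ closedBall 0 0)
        rw [Measure.addHaar_closedBall _ _ le_rfl, finrank_euclideanSpace_fin,
          zero_pow (by omega : d ≠ 0)]
        simp
      have h0 : (volume.restrict (closedBall (0 : EuclideanSpace ℝ (Fin d)) R))
          {(0 : EuclideanSpace ℝ (Fin d))} = 0 :=
        le_antisymm (le_trans (Measure.restrict_le_self _) (le_of_eq h00)) zero_le
      rw [ae_iff]
      apply measure_mono_null _ h0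
      intro y hy
      simp only [Set.mem_setOf_eq, not_le] at hy
      by_contra hne
      exact absurd (ENNReal.ofReal_le_ofReal (hKb y hne s hs)) (not_le.mpr hy)
    calc (∫⁻ y in closedBall (0 : EuclideanSpace ℝ (Fin d)) R, ENNReal.ofReal |K y s|)
        ≤ ∫⁻ y in closedBall (0 : EuclideanSpace ℝ (Fin d)) R,
            ENNReal.ofReal (C₀ * min (‖y‖ ^ (-(d : ℝ))) (s ^ (-(d : ℝ) / 2))) :=
          lintegral_mono_ae hae
      _ ≤ V * ENNReal.ofReal (C₀ * (1 + d * Real.log (R / Real.sqrt s))) :=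
          inner_bound d hd C₀ hC₀ R s hs hsR
      _ ≤ V * ENNReal.ofReal (C₀ * (1 + d * (L + Real.sqrt t / Real.sqrt s))) := by
          apply mul_le_mul_right
          apply ENNReal.ofReal_le_ofReal
          have hlog : Real.log (R / Real.sqrt s) ≤ L + Real.sqrt t / Real.sqrt s := by
            have hsplit : Real.log (R / Real.sqrt s)
                = L + Real.log (Real.sqrt t / Real.sqrt s) := by
              rw [hL, ← Real.log_mul (by positivity) (by positivity)]
              congr 1
              field_simp
            rw [hsplit]
            have := Real.log_le_sub_one_of_pos (div_pos hrt hsq)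
            linarith
          gcongr
  -- integrate in s
  have hmeasG : Measurable fun s : ℝ =>
      V * ENNReal.ofReal (C₀ * (1 + d * (L + Real.sqrt t / Real.sqrt s))) := by
    fun_prop
  have h1 : (∫⁻ s in Ioc (0:ℝ) t,
      ∫⁻ y in closedBall (0 : EuclideanSpace ℝ (Fin d)) R, ENNReal.ofReal |K y s|)
      ≤ ∫⁻ s in Ioc (0:ℝ) t,
          V * ENNReal.ofReal (C₀ * (1 + d * (L + Real.sqrt t / Real.sqrt s))) :=
    setLIntegral_mono hmeasG hstep
  -- compute the s-integral bound
  have hIoc : (∫⁻ s in Ioc (0:ℝ) t,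
      V * ENNReal.ofReal (C₀ * (1 + d * (L + Real.sqrt t / Real.sqrt s))))
      ≤ V * (ENNReal.ofReal (C₀ * (1 + d * L) * t) + ENNReal.ofReal (C₀ * d * (2 * t))) := by
    rw [lintegral_const_mul _ (by fun_prop)]
    apply mul_le_mul_right
    have hsplitf : ∀ s ∈ Ioc (0:ℝ) t,
        ENNReal.ofReal (C₀ * (1 + d * (L + Real.sqrt t / Real.sqrt s)))
          = ENNReal.ofReal (C₀ * (1 + d * L))
            + ENNReal.ofReal (C₀ * d * (Real.sqrt t / Real.sqrt s)) := by
      intro s hsmem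
      have hnn1 : (0:ℝ) ≤ C₀ * (1 + d * L) :=
        mul_nonneg hC₀.le (by nlinarith [mul_nonneg hd0.le (by linarith : (0:ℝ) ≤ L)])
      rw [← ENNReal.ofReal_add hnn1 (by positivity)]
      congr 1
      ring
    calc (∫⁻ s in Ioc (0:ℝ) t,
          ENNReal.ofReal (C₀ * (1 + d * (L + Real.sqrt t / Real.sqrt s))))
        = ∫⁻ s in Ioc (0:ℝ) t,
            (ENNReal.ofReal (C₀ * (1 + d * L))
              + ENNReal.ofReal (C₀ * d * (Real.sqrt t / Real.sqrt s))) := by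
          apply setLIntegral_congr_fun measurableSet_Ioc
          exact hsplitf
      _ = (∫⁻ _ in Ioc (0:ℝ) t, ENNReal.ofReal (C₀ * (1 + d * L)))
            + ∫⁻ s in Ioc (0:ℝ) t, ENNReal.ofReal (C₀ * d * (Real.sqrt t / Real.sqrt s)) :=
          lintegral_add_right _ (by fun_prop)
      _ ≤ ENNReal.ofReal (C₀ * (1 + d * L) * t) + ENNReal.ofReal (C₀ * d * (2 * t)) := by
          apply add_le_add
          · rw [setLIntegral_const, Real.volume_Ioc, sub_zero,
              ← ENNReal.ofReal_mul
                (mul_nonneg hC₀.le (by nlinarith [mul_nonneg hd0.le (by linarith : (0:ℝ) ≤ L)]))]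
          · -- the rpow integral
            have heq : EqOn (fun s : ℝ => Real.sqrt t / Real.sqrt s)
                (fun s : ℝ => Real.sqrt t * s ^ (-(1:ℝ)/2)) (Ioc (0:ℝ) t) := by
              intro s hsmem
              have hs : 0 < s := hsmem.1
              simp only
              rw [Real.sqrt_eq_rpow s, div_eq_mul_inv, ← Real.rpow_neg hs.le]
              norm_num
            have hii : IntervalIntegrable (fun s : ℝ => Real.sqrt t * s ^ (-(1:ℝ)/2))
                volume 0 t :=
              (intervalIntegral.intervalIntegrable_rpow' (by norm_num)).const_mul _
            have hint : IntegrableOn (fun s : ℝ => Real.sqrt t / Real.sqrt s)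
                (Ioc (0:ℝ) t) volume :=
              (hii.1).congr_fun heq.symm measurableSet_Ioc
            have heq2 : EqOn (fun s : ℝ => Real.sqrt t / Real.sqrt s)
                (fun s : ℝ => Real.sqrt t * s ^ (-(1:ℝ)/2)) (uIcc (0:ℝ) t) := by
              rw [uIcc_of_le ht.le]
              intro s hsmem
              rcases eq_or_lt_of_le hsmem.1 with h | h
              · simp only [← h]
                rw [Real.sqrt_zero, div_zero, Real.zero_rpow (by norm_num), mul_zero]
              · exact heq ⟨h, hsmem.2⟩
            have hintval : (∫ s in Ioc (0:ℝ) t, Real.sqrt t / Real.sqrt s) = 2 * t := by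
              rw [← intervalIntegral.integral_of_le ht.le,
                intervalIntegral.integral_congr heq2, intervalIntegral.integral_const_mul,
                integral_rpow (Or.inl (by norm_num))]
              rw [show (-(1:ℝ)/2 + 1) = 1/2 by norm_num,
                Real.zero_rpow (by norm_num : (1:ℝ)/2 ≠ 0), ← Real.sqrt_eq_rpow]
              have h2 : Real.sqrt t * Real.sqrt t = t := Real.mul_self_sqrt ht.le
              field_simp
              linarith
            have hnnae : 0 ≤ᵐ[volume.restrict (Ioc (0:ℝ) t)]
                fun s : ℝ => Real.sqrt t / Real.sqrt s := by
              filter_upwards with s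
              positivity
            calc (∫⁻ s in Ioc (0:ℝ) t,
                  ENNReal.ofReal (C₀ * d * (Real.sqrt t / Real.sqrt s)))
                = ∫⁻ s in Ioc (0:ℝ) t,
                    ENNReal.ofReal (C₀ * d) * ENNReal.ofReal (Real.sqrt t / Real.sqrt s) := by
                  apply setLIntegral_congr_fun measurableSet_Ioc
                  intro s hsmem
                  simp only
                  rw [← ENNReal.ofReal_mul (by positivity)]
              _ = ENNReal.ofReal (C₀ * d)
                    * ∫⁻ s in Ioc (0:ℝ) t, ENNReal.ofReal (Real.sqrt t / Real.sqrt s) :=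
                  lintegral_const_mul _ (by fun_prop)
              _ = ENNReal.ofReal (C₀ * d) * ENNReal.ofReal (2 * t) := by
                  rw [← ofReal_integral_eq_lintegral_ofReal hint hnnae, hintval]
              _ = ENNReal.ofReal (C₀ * d * (2 * t)) := by
                  rw [← ENNReal.ofReal_mul (by positivity)]
              _ ≤ ENNReal.ofReal (C₀ * d * (2 * t)) := le_rfl
  -- final combination
  calc (∫⁻ s in Ioc (0:ℝ) t,
        ∫⁻ y in closedBall (0 : EuclideanSpace ℝ (Fin d)) R, ENNReal.ofReal |K y s|)
      ≤ V * (ENNReal.ofReal (C₀ * (1 + d * L) * t) + ENNReal.ofReal (C₀ * d * (2 * t))) :=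
        h1.trans hIoc
    _ ≤ ENNReal.ofReal (Vr * (C₀ * (4 * d)) * t * L) := by
        rw [← ENNReal.ofReal_toReal hVfin, ← hVr,
          ← ENNReal.ofReal_add
            (mul_nonneg (mul_nonneg hC₀.le
              (by nlinarith [mul_nonneg hd0.le (by linarith : (0:ℝ) ≤ L)])) ht.le)
            (by positivity),
          ← ENNReal.ofReal_mul hVrpos.le]
        apply ENNReal.ofReal_le_ofReal
        have hd2 : (2:ℝ) ≤ d := by exact_mod_cast hd
        have hmain : (1 + (d:ℝ)*L) + 2*(d:ℝ) ≤ 4*((d:ℝ)*L) := by nlinarith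
        have hfac : Vr * (C₀*(1+(d:ℝ)*L)*t + C₀*(d:ℝ)*(2*t))
            = (Vr*C₀*t)*((1+(d:ℝ)*L)+2*(d:ℝ)) := by ring
        have hfac2 : Vr*(C₀*(4*(d:ℝ)))*t*L = (Vr*C₀*t)*(4*((d:ℝ)*L)) := by ring
        rw [hfac, hfac2]
        exact mul_le_mul_of_nonneg_left hmain (by positivity)
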